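/- arXiv:2509.14544 — 2 statements merged into one kernel-verified Lean document; each statement's English description precedes it below -/
import Mathlib

section
/- Let X ∈ ℝ^{n×d} and Z ∈ ℝ^{n×m} with m ≤ d, and suppose Zᵀ·X admits a factorization Zᵀ·X = U · diagonal(s) · Vᵀ, where U ∈ ℝ^{m×m} satisfies Uᵀ·U = I_m, V ∈ ℝ^{d×m} satisfies Vᵀ·V = I_m, and s ∈ ℝ^m has nonnegative entries. Then A* = U·Vᵀ satisfies A*·(A*)ᵀ = I_m and, for every A ∈ ℝ^{m×d} with A·Aᵀ = I_m, ‖X − Z·A*‖_F ≤ ‖X − Z·A‖_F. -/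
open Matrix

/-- Frobenius norm of a real matrix. -/
noncomputable def frobNorm {n d : ℕ} (M : Matrix (Fin n) (Fin d) ℝ) : ℝ :=
  Real.sqrt (∑ i, ∑ j, (M i j) ^ 2)

lemma frob_sq_eq_trace {n d : ℕ} (M : Matrix (Fin n) (Fin d) ℝ) :
    ∑ i, ∑ j, (M i j) ^ 2 = (Mᵀ * M).trace := by
  simp only [Matrix.trace, Matrix.diag, Matrix.mul_apply, Matrix.transpose_apply, sq]
  rw [Finset.sum_comm]

/-- Closed-form solution of the orthogonal Procrustes problem:
if `Zᵀ * X = U * diagonal s * Vᵀ` with `Uᵀ * U = I`, `Vᵀ * V = I` and `s` nonnegative,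
then `A* = U * Vᵀ` is row-orthonormal and minimizes `‖X - Z * A‖_F` over all row-orthonormal `A`. -/
theorem procrustes_optimal {n d m : ℕ} (hmd : m ≤ d)
    (X : Matrix (Fin n) (Fin d) ℝ) (Z : Matrix (Fin n) (Fin m) ℝ)
    (U : Matrix (Fin m) (Fin m) ℝ) (V : Matrix (Fin d) (Fin m) ℝ) (s : Fin m → ℝ)
    (hU : Uᵀ * U = 1) (hV : Vᵀ * V = 1) (hs : ∀ i, 0 ≤ s i)
    (hfact : Zᵀ * X = U * Matrix.diagonal s * Vᵀ) :
    (U * Vᵀ) * (U * Vᵀ)ᵀ = 1 ∧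
    ∀ A : Matrix (Fin m) (Fin d) ℝ, A * Aᵀ = 1 →
      frobNorm (X - Z * (U * Vᵀ)) ≤ frobNorm (X - Z * A) := by
  have hUU : U * Uᵀ = 1 := mul_eq_one_comm.mp hU
  have hA0 : (U * Vᵀ) * (U * Vᵀ)ᵀ = 1 := by
    rw [Matrix.transpose_mul, Matrix.transpose_transpose]
    calc U * Vᵀ * (V * Uᵀ) = U * (Vᵀ * V) * Uᵀ := by
          simp only [Matrix.mul_assoc]
      _ = 1 := by rw [hV, Matrix.mul_one, hUU]
  refine ⟨hA0, ?_⟩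
  intro A hA
  -- energy expansion for any row-orthonormal B
  have energy : ∀ B : Matrix (Fin m) (Fin d) ℝ, B * Bᵀ = 1 →
      ∑ i, ∑ j, ((X - Z * B) i j) ^ 2
        = (Xᵀ * X).trace + (Zᵀ * Z).trace - 2 * (Bᵀ * (Zᵀ * X)).trace := by
    intro B hB
    rw [frob_sq_eq_trace]
    have hexp : (X - Z * B)ᵀ * (X - Z * B)
        = Xᵀ * X - Xᵀ * (Z * B) - Bᵀ * (Zᵀ * X) + Bᵀ * Zᵀ * (Z * B) := by
      simp only [Matrix.transpose_sub, Matrix.transpose_mul, Matrix.sub_mul,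
        Matrix.mul_sub, Matrix.mul_assoc]
      abel
    rw [hexp]
    have h1 : (Xᵀ * (Z * B)).trace = (Bᵀ * (Zᵀ * X)).trace := by
      rw [← Matrix.trace_transpose (Xᵀ * (Z * B))]
      simp [Matrix.transpose_mul, Matrix.mul_assoc]
    have h2 : (Bᵀ * Zᵀ * (Z * B)).trace = (Zᵀ * Z).trace := by
      calc (Bᵀ * Zᵀ * (Z * B)).trace = (Bᵀ * (Zᵀ * Z * B)).trace := by
            simp only [Matrix.mul_assoc]
        _ = (Zᵀ * Z * B * Bᵀ).trace := by rw [Matrix.trace_mul_comm]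
        _ = (Zᵀ * Z).trace := by rw [Matrix.mul_assoc, hB, Matrix.mul_one]
    rw [Matrix.trace_add, Matrix.trace_sub, Matrix.trace_sub, h1, h2]
    ring
  -- trace as weighted sum of diagonal entries
  have traceform : ∀ B : Matrix (Fin m) (Fin d) ℝ,
      (Bᵀ * (Zᵀ * X)).trace = ∑ i, (Vᵀ * Bᵀ * U) i i * s i := by
    intro B
    rw [hfact]
    calc (Bᵀ * (U * Matrix.diagonal s * Vᵀ)).trace
        = ((Bᵀ * U * Matrix.diagonal s) * Vᵀ).trace := by simp only [Matrix.mul_assoc]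
      _ = (Vᵀ * (Bᵀ * U * Matrix.diagonal s)).trace := Matrix.trace_mul_comm _ _
      _ = (Vᵀ * Bᵀ * U * Matrix.diagonal s).trace := by simp only [Matrix.mul_assoc]
      _ = ∑ i, (Vᵀ * Bᵀ * U) i i * s i := by
          simp [Matrix.trace, Matrix.diag, Matrix.mul_diagonal]
  -- diagonal bound
  have diagbound : ∀ B : Matrix (Fin m) (Fin d) ℝ, B * Bᵀ = 1 →
      ∀ i, (Vᵀ * Bᵀ * U) i i ≤ 1 := by
    intro B hB i
    have hVcol : ∑ j, (V j i) ^ 2 = 1 := by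
      have := congrFun (congrFun hV i) i
      simpa [Matrix.mul_apply, Matrix.one_apply, sq] using this
    have hBUcol : ∑ j, ((Bᵀ * U) j i) ^ 2 = 1 := by
      have key : (Bᵀ * U)ᵀ * (Bᵀ * U) = 1 := by
        calc (Bᵀ * U)ᵀ * (Bᵀ * U) = Uᵀ * (B * Bᵀ * U) := by
              simp only [Matrix.transpose_mul, Matrix.transpose_transpose,
                Matrix.mul_assoc]
          _ = 1 := by rw [hB, Matrix.one_mul, hU]
      have := congrFun (congrFun key i) i
      simp only [Matrix.mul_apply, Matrix.transpose_apply, Matrix.one_apply_eq] at this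
      simpa [sq, Matrix.mul_apply] using this
    have hcs := Finset.sum_mul_sq_le_sq_mul_sq Finset.univ
      (fun j => V j i) (fun j => (Bᵀ * U) j i)
    have hval : (Vᵀ * Bᵀ * U) i i = ∑ j, V j i * (Bᵀ * U) j i := by
      simp only [Matrix.mul_apply, Matrix.transpose_apply, Finset.sum_mul,
        Finset.mul_sum]
      rw [Finset.sum_comm]
      exact Finset.sum_congr rfl fun _ _ => Finset.sum_congr rfl fun _ _ => by ring
    rw [hval]
    simp only [hVcol, hBUcol, one_mul] at hcs
    nlinarith [hcs]
  -- value at the optimum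
  have hopt : (Vᵀ * (U * Vᵀ)ᵀ * U) = 1 := by
    rw [Matrix.transpose_mul, Matrix.transpose_transpose]
    calc Vᵀ * (V * Uᵀ) * U = Vᵀ * V * (Uᵀ * U) := by simp only [Matrix.mul_assoc]
      _ = 1 := by rw [hV, hU, Matrix.mul_one]
  have htrace_le : ((U * Vᵀ)ᵀ * (Zᵀ * X)).trace ≥ (Aᵀ * (Zᵀ * X)).trace := by
    rw [traceform, traceform, hopt]
    apply Finset.sum_le_sum
    intro i _
    have h1 : (Vᵀ * Aᵀ * U) i i ≤ 1 := diagbound A hA i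
    have h2 : ((1 : Matrix (Fin m) (Fin m) ℝ)) i i = 1 := Matrix.one_apply_eq i
    rw [h2, one_mul]
    exact mul_le_of_le_one_left (hs i) h1
  -- conclude
  unfold frobNorm
  apply Real.sqrt_le_sqrt
  rw [energy _ hA0, energy _ hA]
  linarith
end

section
/- Let s ∈ ℝ and ρ > 0, let φ(x) = (1 − e^{−x})/(1 + e^{−x}) with φ'(x) = 2·e^{−x}/(1 + e^{−x})², and define h(x) = (1/2)·(x − s)² + (1/ρ)·φ(x) and T(x) = max(s − φ'(x)/ρ, 0). Then for every x ≥ 0, h(T(x)) ≤ h(x); that is, one step of the difference-of-convex (CCCP) update does not increase the objective of the scalar ARMR proximal subproblem. -/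
/-- The ARMR surrogate `φ(x) = (1 - e^{-x})/(1 + e^{-x})`. -/
noncomputable def phi (x : ℝ) : ℝ := (1 - Real.exp (-x)) / (1 + Real.exp (-x))

/-- The derivative `φ'(x) = 2e^{-x}/(1 + e^{-x})²` of the ARMR surrogate. -/
noncomputable def phi' (x : ℝ) : ℝ := 2 * Real.exp (-x) / (1 + Real.exp (-x)) ^ 2

lemma hasDerivAt_phi (t : ℝ) : HasDerivAt phi (phi' t) t := by
  have he : HasDerivAt (fun x : ℝ => Real.exp (-x)) (-Real.exp (-t)) t := by
    simpa using (hasDerivAt_neg t).exp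
  have h1 : HasDerivAt (fun x : ℝ => 1 - Real.exp (-x)) (Real.exp (-t)) t := by
    simpa using he.const_sub (1:ℝ)
  have h2 : HasDerivAt (fun x : ℝ => 1 + Real.exp (-x)) (-Real.exp (-t)) t := by
    simpa using he.const_add (1:ℝ)
  have hd : (0:ℝ) < 1 + Real.exp (-t) := by positivity
  have := h1.div h2 (ne_of_gt hd)
  refine this.congr_deriv ?_
  unfold phi'
  field_simp
  ring

lemma phi'_anti {a b : ℝ} (hb : 0 ≤ b) (hba : b ≤ a) : phi' a ≤ phi' b := by
  unfold phi'
  set u := Real.exp (-a) with hu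
  set v := Real.exp (-b) with hv
  have hu0 : 0 < u := Real.exp_pos _
  have hv0 : 0 < v := Real.exp_pos _
  have huv : u ≤ v := Real.exp_le_exp.2 (by linarith)
  have hv1 : v ≤ 1 := Real.exp_le_one_iff.2 (by linarith)
  rw [div_le_div_iff₀ (by positivity) (by positivity)]
  have huv1 : u * v ≤ 1 := le_trans (by nlinarith) hv1
  nlinarith [mul_nonneg (sub_nonneg.2 huv) (sub_nonneg.2 huv1)]

lemma phi_tangent {x y : ℝ} (hx : 0 ≤ x) (hy : 0 ≤ y) :
    phi y ≤ phi x + phi' x * (y - x) := by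
  rcases lt_trichotomy x y with h | h | h
  · obtain ⟨c, hc, hc'⟩ := exists_hasDerivAt_eq_slope phi phi' h
      (fun t _ => (hasDerivAt_phi t).continuousAt.continuousWithinAt)
      (fun t _ => hasDerivAt_phi t)
    have hle : phi' c ≤ phi' x := phi'_anti hx hc.1.le
    have : (phi y - phi x) / (y - x) ≤ phi' x := hc' ▸ hle
    have hyx : 0 < y - x := by linarith
    rw [div_le_iff₀ hyx] at this
    linarith
  · simp [h]
  · obtain ⟨c, hc, hc'⟩ := exists_hasDerivAt_eq_slope phi phi' h
      (fun t _ => (hasDerivAt_phi t).continuousAt.continuousWithinAt)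
      (fun t _ => hasDerivAt_phi t)
    have hle : phi' x ≤ phi' c := phi'_anti (le_trans hy hc.1.le) hc.2.le
    have : phi' x ≤ (phi x - phi y) / (x - y) := hc' ▸ hle
    have hxy : 0 < x - y := by linarith
    rw [le_div_iff₀ hxy] at this
    nlinarith

/-- One CCCP step `T(x) = max (s - φ'(x)/ρ) 0` does not increase the objective
`h(x) = (1/2)(x - s)² + (1/ρ)φ(x)` of the scalar ARMR proximal subproblem on `[0, ∞)`. -/
theorem cccp_step_descent (s ρ : ℝ) (hρ : 0 < ρ) :
    ∀ x : ℝ, 0 ≤ x →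
      1 / 2 * (max (s - phi' x / ρ) 0 - s) ^ 2 + (1 / ρ) * phi (max (s - phi' x / ρ) 0)
        ≤ 1 / 2 * (x - s) ^ 2 + (1 / ρ) * phi x := by
  intro x hx
  set q := phi' x / ρ with hq
  set t := max (s - q) 0 with ht
  have ht0 : 0 ≤ t := le_max_right _ _
  have key : phi t ≤ phi x + phi' x * (t - x) := phi_tangent hx ht0
  have hkey' : (1 / ρ) * phi t ≤ (1 / ρ) * phi x + q * (t - x) := by
    have := mul_le_mul_of_nonneg_left key (by positivity : (0:ℝ) ≤ 1 / ρ)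
    have hqr : (1 / ρ) * (phi' x * (t - x)) = q * (t - x) := by
      rw [hq]; ring
    nlinarith [this]
  have hproj : (t - (s - q)) ^ 2 ≤ (x - (s - q)) ^ 2 := by
    rcases le_or_gt 0 (s - q) with h | h
    · rw [ht, max_eq_left h]; nlinarith [sq_nonneg (x - (s - q))]
    · rw [ht, max_eq_right h.le]; nlinarith
  nlinarith [hproj, hkey']
end
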